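/- Let φ : ℝ → ℝ be defined by φ(x) = x for x ≤ 0 and φ(x) = x/2 for x ≥ 0. Then φ is a homeomorphism of ℝ, and, with φ^n denoting the n-th iterate of φ for n ∈ ℤ (negative n meaning iterates of the inverse), the interior in the product space ℝ × ℤ (ℤ carrying the discrete topology) of the isotropy set {(x, n) ∈ ℝ × ℤ : φ^n(x) = x} equals {(x, n) ∈ ℝ × ℤ : n = 0 or x < 0}. -/

import Mathlib

noncomputable def halvingEquiv : ℝ ≃ ℝ where
  toFun x := if x ≤ 0 then x else x / 2
  invFun x := if x ≤ 0 then x else 2 * x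
  left_inv x := by
    by_cases h : x ≤ 0
    · simp [h]
    · push_neg at h
      have h2 : ¬ (x / 2 ≤ 0) := by push_neg; linarith
      simp [h.not_ge, h2]; ring
  right_inv x := by
    by_cases h : x ≤ 0
    · simp [h]
    · push_neg at h
      have h2 : ¬ (2 * x ≤ 0) := by push_neg; linarith
      simp [h.not_ge, h2]

noncomputable def halvingHomeo : ℝ ≃ₜ ℝ where
  toEquiv := halvingEquiv
  continuous_toFun := by
    simpa [halvingEquiv] using
      Continuous.if_le continuous_id (continuous_id.div_const 2) continuous_id
        continuous_const (fun x hx => by simp_all)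
  continuous_invFun := by
    simpa [halvingEquiv] using
      Continuous.if_le continuous_id (continuous_const.mul continuous_id) continuous_id
        continuous_const (fun x hx => by simp_all)

lemma halving_fix_nonpos (n : ℤ) {x : ℝ} (hx : x ≤ 0) :
    (halvingEquiv ^ n) x = x := by
  have h1 : halvingEquiv x = x := by simp [halvingEquiv, hx]
  have h2 : halvingEquiv⁻¹ x = x := by
    rw [Equiv.Perm.inv_def, Equiv.symm_apply_eq, h1]
  induction n using Int.induction_on with
  | zero => simp
  | succ k ih => rw [zpow_add_one, Equiv.Perm.mul_apply, h1, ih]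
  | pred k ih => rw [zpow_sub_one, Equiv.Perm.mul_apply, h2, ih]

lemma halving_pos (n : ℤ) {x : ℝ} (hx : 0 < x) :
    (halvingEquiv ^ n) x = x / 2 ^ n := by
  induction n using Int.induction_on generalizing x with
  | zero => simp
  | succ k ih =>
      have h1 : halvingEquiv x = x / 2 := by simp [halvingEquiv, hx.not_ge]
      rw [zpow_add_one, Equiv.Perm.mul_apply, h1, ih (by linarith)]
      rw [zpow_add_one₀ (by norm_num : (2:ℝ) ≠ 0), div_div, mul_comm]
  | pred k ih =>
      have h1 : halvingEquiv⁻¹ x = 2 * x := by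
        have : halvingEquiv (2 * x) = x := by
          have : ¬ (2 * x ≤ 0) := by push_neg; linarith
          simp [halvingEquiv, this]
        have := congrArg halvingEquiv.symm this
        simpa using this.symm
      rw [zpow_sub_one, Equiv.Perm.mul_apply, h1, ih (by linarith)]
      rw [zpow_sub_one₀ (by norm_num : (2:ℝ) ≠ 0)]
      field_simp

/-- Let `φ : ℝ → ℝ` be `φ x = x` for `x ≤ 0` and `φ x = x / 2` for `x ≥ 0`.
Then `φ` is a homeomorphism of `ℝ`, and the interior in `ℝ × ℤ` (with `ℤ`
discrete) of the isotropy set `{(x, n) | φ^n x = x}` (where `φ^n` is the `n`-th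
iterate, `n ∈ ℤ`) equals `{(x, n) | n = 0 ∨ x < 0}`. -/
theorem interior_isotropy_of_halving_homeomorph :
    ∃ Φ : ℝ ≃ₜ ℝ,
      (∀ x : ℝ, Φ x = if x ≤ 0 then x else x / 2) ∧
      interior {p : ℝ × ℤ | (Φ.toEquiv ^ p.2) p.1 = p.1} =
        {p : ℝ × ℤ | p.2 = 0 ∨ p.1 < 0} := by
  refine ⟨halvingHomeo, fun x => rfl, ?_⟩
  have hEq : halvingHomeo.toEquiv = halvingEquiv := rfl
  rw [hEq]
  set S : Set (ℝ × ℤ) := {p : ℝ × ℤ | (halvingEquiv ^ p.2) p.1 = p.1} with hS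
  have hSmem : ∀ p : ℝ × ℤ, p ∈ S ↔ (p.2 = 0 ∨ p.1 ≤ 0) := by
    rintro ⟨x, n⟩
    simp only [hS, Set.mem_setOf_eq]
    constructor
    · intro h
      by_contra hc
      push_neg at hc
      obtain ⟨hn, hx⟩ := hc
      rw [halving_pos n hx] at h
      have hne : (2:ℝ) ^ n ≠ 0 := zpow_ne_zero _ two_ne_zero
      have h2 : (2:ℝ) ^ n = 1 := by
        rw [div_eq_iff hne] at h
        have := mul_left_cancel₀ (ne_of_gt hx) (by linarith : x * 1 = x * 2 ^ n)
        exact this.symm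
      exact hn (zpow_right_injective₀ (by norm_num : (0:ℝ) < 2) (by norm_num)
        (by simpa using h2 : (2:ℝ) ^ n = 2 ^ (0:ℤ)))
    · rintro (h | h)
      · simp [h]
      · exact halving_fix_nonpos n h
  apply Set.Subset.antisymm
  · rintro ⟨x, n⟩ hp
    simp only [Set.mem_setOf_eq]
    by_contra hc
    push_neg at hc
    obtain ⟨hn, hx⟩ := hc
    have hxS := (hSmem _).mp (interior_subset hp)
    have hx0 : x = 0 := le_antisymm (hxS.resolve_left hn) hx
    subst hx0
    have hnhds : S ∈ nhds ((0:ℝ), n) := mem_interior_iff_mem_nhds.mp hp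
    have hcont : Continuous fun y : ℝ => (y, n) := by continuity
    have : {y : ℝ | (y, n) ∈ S} ∈ nhds (0:ℝ) := hcont.continuousAt.preimage_mem_nhds hnhds
    have hsub : {y : ℝ | (y, n) ∈ S} = Set.Iic 0 := by
      ext y; simp [hSmem (y, n), hn]
    rw [hsub] at this
    have : (0:ℝ) ∈ interior (Set.Iic (0:ℝ)) := mem_interior_iff_mem_nhds.mpr this
    simp [interior_Iic] at this
  · rintro ⟨x, n⟩ hp
    simp only [Set.mem_setOf_eq] at hp
    rcases hp with h | h
    · subst h
      refine mem_interior.mpr ⟨Set.univ ×ˢ {0}, ?_, ?_, by simp⟩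
      · rintro ⟨y, m⟩ ⟨-, hm⟩
        simp only [Set.mem_singleton_iff] at hm
        exact (hSmem (y, m)).mpr (Or.inl hm)
      · exact isOpen_univ.prod (isOpen_discrete _)
    · refine mem_interior.mpr ⟨Set.Iio 0 ×ˢ Set.univ, ?_, ?_, by simp [h]⟩
      · rintro ⟨y, m⟩ ⟨hy, -⟩
        exact (hSmem (y, m)).mpr (Or.inr (le_of_lt hy))
      · exact isOpen_Iio.prod isOpen_univ
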